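/- If 3 ≤ m ≤ n and M ≥ 300·n, then for every vector y ∈ ℝ^(E ⊔ V), Σ_{v∈S} ⟨y, z_v⟩² ≤ ((m + 1.515)/2)·‖y‖²·max_{v∈S} ‖z_v‖². -/

import Mathlib

open Finset
open scoped InnerProductSpace


private lemma aux_term_cases {V E : Type*} [DecidableEq V]
    (tail head : E → V) (u v : V) (huv : u ≠ v)
    (f g : E → ℝ)
    (hf : ∀ e, f e = if head e = u then -1 else if tail e = u then 1 else 0)
    (hg : ∀ e, g e = if head e = v then -1 else if tail e = v then 1 else 0)
    (e : E) :
    (f e * g e = 0) ∨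
      (f e * g e = -1 ∧ tail e ≠ head e ∧ (s(tail e, head e) : Sym2 V) = s(u, v)) := by
  rw [hf, hg]
  by_cases h1 : head e = u <;> by_cases h2 : head e = v <;>
    by_cases h3 : tail e = u <;> by_cases h4 : tail e = v <;>
    simp_all [Sym2.eq_swap]

private lemma aux_card_incident {V E : Type*} [Fintype V] [DecidableEq V]
    [Fintype E] [DecidableEq E]
    (G : SimpleGraph V) [DecidableRel G.Adj]
    (tail head : E → V)
    (hadj : ∀ e : E, tail e ≠ head e → G.Adj (tail e) (head e))
    (hinj : ∀ e₁ e₂ : E, tail e₁ ≠ head e₁ → tail e₂ ≠ head e₂ →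
      (s(tail e₁, head e₁) : Sym2 V) = s(tail e₂, head e₂) → e₁ = e₂)
    (hsurj : ∀ u v : V, G.Adj u v → ∃ e : E, (s(tail e, head e) : Sym2 V) = s(u, v))
    (hloops : ∀ v : V, (Finset.univ.filter fun e : E => tail e = v ∧ head e = v).card
        = Fintype.card V - G.degree v)
    (v : V) :
    (Finset.univ.filter fun e : E => tail e = v ∨ head e = v).card = Fintype.card V := by
  classical
  have hsplit := Finset.card_filter_add_card_filter_not
    (s := Finset.univ.filter fun e : E => tail e = v ∨ head e = v)
    (p := fun e => tail e = head e)
  rw [Finset.filter_filter, Finset.filter_filter] at hsplit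
  have hL : (Finset.univ.filter fun e : E => (tail e = v ∨ head e = v) ∧ tail e = head e)
      = Finset.univ.filter fun e : E => tail e = v ∧ head e = v := by
    apply Finset.filter_congr
    intro e _
    constructor
    · rintro ⟨h | h, he⟩ <;> constructor <;> simp_all
    · rintro ⟨h1, h2⟩; exact ⟨Or.inl h1, h1.trans h2.symm⟩
  have hN : (Finset.univ.filter fun e : E => (tail e = v ∨ head e = v) ∧ ¬ tail e = head e).card
      = G.degree v := by
    rw [← G.card_neighborFinset_eq_degree]
    apply Finset.card_bij (fun e _ => if tail e = v then head e else tail e)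
    · intro e he
      simp only [Finset.mem_filter, Finset.mem_univ, true_and] at he
      obtain ⟨hor, hne⟩ := he
      have hAdj := hadj e hne
      by_cases ht : tail e = v
      · simpa [ht, SimpleGraph.mem_neighborFinset] using ht ▸ hAdj
      · have hh : head e = v := hor.resolve_left ht
        simp only [ht, if_false, SimpleGraph.mem_neighborFinset]
        exact (hh ▸ hAdj).symm
    · intro e1 h1 e2 h2 hf
      simp only [Finset.mem_filter, Finset.mem_univ, true_and] at h1 h2
      have key : ∀ e : E, (tail e = v ∨ head e = v) ∧ ¬ tail e = head e →
          (s(tail e, head e) : Sym2 V) = s(v, if tail e = v then head e else tail e) := by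
        rintro e ⟨hor, hne⟩
        by_cases ht : tail e = v
        · simp [ht]
        · have hh : head e = v := hor.resolve_left ht
          simp [ht, hh, Sym2.eq_swap]
      exact hinj e1 e2 h1.2 h2.2 ((key e1 h1).trans (by rw [hf, ← key e2 h2]))
    · intro w hw
      rw [SimpleGraph.mem_neighborFinset] at hw
      obtain ⟨e, he⟩ := hsurj v w hw
      have hvw : v ≠ w := hw.ne
      rcases Sym2.eq_iff.mp he with ⟨h1, h2⟩ | ⟨h1, h2⟩
      · exact ⟨e, by simp [Finset.mem_filter, h1, h2, hvw], by simp [h1, h2]⟩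
      · have hwv : w ≠ v := fun hh => hvw hh.symm
        refine ⟨e, by simp [Finset.mem_filter, h1, h2, hwv], ?_⟩
        have ht : tail e ≠ v := by rw [h1]; exact hwv
        rw [if_neg ht, h1]
  rw [hL, hN, hloops v] at hsplit
  have hdeg : G.degree v < Fintype.card V := G.degree_lt_card_verts v
  omega

set_option maxHeartbeats 4000000 in
/-- If `3 ≤ m ≤ n` and `M ≥ 300·n`, then for every vector `y`,
`Σ_{v∈S} ⟨y, z_v⟩² ≤ ((m + 1.515)/2)·‖y‖²·max_{v∈S} ‖z_v‖²`. -/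
theorem sum_inner_sq_bound
    {V E : Type*} [Fintype V] [DecidableEq V] [Fintype E] [DecidableEq E]
    (G : SimpleGraph V) [DecidableRel G.Adj]
    (tail head : E → V)
    (hadj : ∀ e : E, tail e ≠ head e → G.Adj (tail e) (head e))
    (hinj : ∀ e₁ e₂ : E, tail e₁ ≠ head e₁ → tail e₂ ≠ head e₂ →
      (s(tail e₁, head e₁) : Sym2 V) = s(tail e₂, head e₂) → e₁ = e₂)
    (hsurj : ∀ u v : V, G.Adj u v → ∃ e : E, (s(tail e, head e) : Sym2 V) = s(u, v))
    (hloops : ∀ v : V, (Finset.univ.filter fun e : E => tail e = v ∧ head e = v).card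
        = Fintype.card V - G.degree v)
    (M : ℝ) (hM : 0 < M)
    (x : V → EuclideanSpace ℝ (E ⊕ V))
    (hxE : ∀ (v : V) (e : E),
      x v (Sum.inl e) = if head e = v then -1 else if tail e = v then 1 else 0)
    (hxV : ∀ v u : V, x v (Sum.inr u) = if u = v then M else 0)
    (S : Finset V) (m : ℕ) (hS : S.card = m)
    (c : EuclideanSpace ℝ (E ⊕ V)) (hc : c = (m : ℝ)⁻¹ • ∑ v ∈ S, x v)
    (hm : 3 ≤ m) (hmn : m ≤ Fintype.card V)
    (hM300 : 300 * (Fintype.card V : ℝ) ≤ M)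
    (z : V → EuclideanSpace ℝ (E ⊕ V)) (hz : ∀ v : V, z v = x v - c)
 :
    ∀ y : EuclideanSpace ℝ (E ⊕ V),
      ∑ v ∈ S, ⟪y, z v⟫_ℝ ^ 2 ≤
        (((m : ℝ) + 1.515) / 2) * ‖y‖ ^ 2 *
          S.sup' (Finset.card_pos.mp (by rw [hS]; omega)) (fun v => ‖z v‖ ^ 2) := by
  classical
  intro y
  have hSne : S.Nonempty := Finset.card_pos.mp (by rw [hS]; omega)
  set n : ℕ := Fintype.card V with hn
  have hm3 : (3:ℝ) ≤ (m:ℝ) := by exact_mod_cast hm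
  have hmnR : (m:ℝ) ≤ (n:ℝ) := by exact_mod_cast hmn
  have hn3 : (3:ℝ) ≤ (n:ℝ) := le_trans hm3 hmnR
  have hm0 : (0:ℝ) < (m:ℝ) := by linarith
  set Q : ℝ := M^2 + (n:ℝ) with hQdef
  have hQpos : 0 < Q := by positivity
  -- inner product expansion over the sum type
  have hip : ∀ a b : EuclideanSpace ℝ (E ⊕ V),
      ⟪a, b⟫_ℝ = (∑ e : E, a (Sum.inl e) * b (Sum.inl e))
        + ∑ u : V, a (Sum.inr u) * b (Sum.inr u) := by
    intro a b
    rw [PiLp.inner_apply, Fintype.sum_sum_type]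
    simp [RCLike.inner_apply, mul_comm]
  -- counting incident edges
  have hcard : ∀ v : V, (univ.filter fun e : E => tail e = v ∨ head e = v).card = n :=
    fun v => aux_card_incident G tail head hadj hinj hsurj hloops v
  -- squared norm of x v
  have hxx : ∀ v : V, ⟪x v, x v⟫_ℝ = Q := by
    intro v
    rw [hip]
    have h1 : ∑ e : E, x v (Sum.inl e) * x v (Sum.inl e)
        = ∑ e : E, (if tail e = v ∨ head e = v then (1:ℝ) else 0) := by
      apply Finset.sum_congr rfl
      intro e _
      rw [hxE]
      by_cases h1 : head e = v <;> by_cases h2 : tail e = v <;> simp [h1, h2]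
    have h2 : ∑ u : V, x v (Sum.inr u) * x v (Sum.inr u) = M^2 := by
      have he : ∀ u : V, x v (Sum.inr u) * x v (Sum.inr u)
          = if u = v then M^2 else 0 := by
        intro u; rw [hxV]; by_cases h : u = v <;> simp [h, sq]
      rw [Finset.sum_congr rfl fun u _ => he u]
      simp
    rw [h1, h2, Finset.sum_boole, hcard v]
    ring
  -- pairwise inner products
  have hxy : ∀ u v : V, u ≠ v → -1 ≤ ⟪x u, x v⟫_ℝ ∧ ⟪x u, x v⟫_ℝ ≤ 0 := by
    intro u v huv
    have hterm : ∀ e : E, (x u (Sum.inl e) * x v (Sum.inl e) = 0) ∨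
        (x u (Sum.inl e) * x v (Sum.inl e) = -1 ∧ tail e ≠ head e ∧
          (s(tail e, head e) : Sym2 V) = s(u, v)) :=
      aux_term_cases tail head u v huv _ _ (fun e => hxE u e) (fun e => hxE v e)
    have hvpart : ∑ w : V, x u (Sum.inr w) * x v (Sum.inr w) = 0 := by
      apply Finset.sum_eq_zero
      intro w _
      rw [hxV, hxV]
      by_cases h1 : w = u <;> by_cases h2 : w = v <;> simp_all
    have hsum0 : ∑ e : E, x u (Sum.inl e) * x v (Sum.inl e) ≤ 0 := by
      apply Finset.sum_nonpos
      intro e _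
      rcases hterm e with h | ⟨h, _⟩ <;> rw [h] <;> norm_num
    have hsum1 : -1 ≤ ∑ e : E, x u (Sum.inl e) * x v (Sum.inl e) := by
      have hrw := Finset.sum_filter_ne_zero (s := (univ : Finset E))
        (f := fun e : E => x u (Sum.inl e) * x v (Sum.inl e))
      have hc1 : ((univ : Finset E).filter
          (fun e : E => x u (Sum.inl e) * x v (Sum.inl e) ≠ 0)).card ≤ 1 := by
        rw [Finset.card_le_one]
        intro a ha b hb
        simp only [mem_filter] at ha hb
        rcases hterm a with h | ⟨_, hne1, hs1⟩
        · exact absurd h ha.2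
        rcases hterm b with h | ⟨_, hne2, hs2⟩
        · exact absurd h hb.2
        exact hinj a b hne1 hne2 (hs1.trans hs2.symm)
      have hlow := Finset.card_nsmul_le_sum
        ((univ : Finset E).filter (fun e : E => x u (Sum.inl e) * x v (Sum.inl e) ≠ 0))
        (fun e : E => x u (Sum.inl e) * x v (Sum.inl e)) (-1)
        (by
          intro e _
          show -1 ≤ x u (Sum.inl e) * x v (Sum.inl e)
          rcases hterm e with h | ⟨h, _⟩ <;> rw [h] <;> norm_num)
      rw [hrw, nsmul_eq_mul] at hlow
      have hcR : (((univ : Finset E).filter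
          (fun e : E => x u (Sum.inl e) * x v (Sum.inl e) ≠ 0)).card : ℝ) ≤ 1 := by
        exact_mod_cast hc1
      nlinarith
    rw [hip, hvpart]
    constructor <;> linarith
  -- inner products with the centroid
  have hxc : ∀ v ∈ S, Q - m ≤ (m:ℝ) * ⟪x v, c⟫_ℝ ∧ (m:ℝ) * ⟪x v, c⟫_ℝ ≤ Q := by
    intro v hv
    have hrw : (m:ℝ) * ⟪x v, c⟫_ℝ = ∑ w ∈ S, ⟪x v, x w⟫_ℝ := by
      rw [hc, real_inner_smul_right, inner_sum, ← mul_assoc,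
        mul_inv_cancel₀ (ne_of_gt hm0), one_mul]
    rw [hrw, ← Finset.add_sum_erase _ _ hv, hxx v]
    have hub : ∑ w ∈ S.erase v, ⟪x v, x w⟫_ℝ ≤ 0 := by
      apply Finset.sum_nonpos
      intro w hw
      exact (hxy v w (Finset.ne_of_mem_erase hw).symm).2
    have hlb := Finset.card_nsmul_le_sum (S.erase v) (fun w => ⟪x v, x w⟫_ℝ) (-1)
      (fun w hw => (hxy v w (Finset.ne_of_mem_erase hw).symm).1)
    rw [nsmul_eq_mul] at hlb
    have hce : ((S.erase v).card : ℝ) ≤ (m:ℝ) := by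
      have : (S.erase v).card ≤ S.card := Finset.card_erase_le
      rw [hS] at this
      exact_mod_cast this
    constructor <;> linarith
  -- inner product of the centroid with itself
  have hcc : Q - m ≤ (m:ℝ) * ⟪c, c⟫_ℝ ∧ (m:ℝ) * ⟪c, c⟫_ℝ ≤ Q := by
    have hgen : ∀ a : EuclideanSpace ℝ (E ⊕ V),
        (m:ℝ) * ⟪c, a⟫_ℝ = ∑ v ∈ S, ⟪x v, a⟫_ℝ := by
      intro a
      rw [hc, real_inner_smul_left, sum_inner, ← mul_assoc,
        mul_inv_cancel₀ (ne_of_gt hm0), one_mul]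
    have hrw : (m:ℝ) * ((m:ℝ) * ⟪c, c⟫_ℝ) = ∑ v ∈ S, ((m:ℝ) * ⟪x v, c⟫_ℝ) := by
      calc (m:ℝ) * ((m:ℝ) * ⟪c, c⟫_ℝ) = (m:ℝ) * (∑ v ∈ S, ⟪x v, c⟫_ℝ) := by
            rw [hgen c]
        _ = ∑ v ∈ S, ((m:ℝ) * ⟪x v, c⟫_ℝ) := Finset.mul_sum _ _ _
    have hub : ∑ v ∈ S, ((m:ℝ) * ⟪x v, c⟫_ℝ) ≤ (m:ℝ) * Q := by
      calc ∑ v ∈ S, ((m:ℝ) * ⟪x v, c⟫_ℝ) ≤ ∑ _v ∈ S, Q :=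
            Finset.sum_le_sum (fun v hv => (hxc v hv).2)
        _ = (m:ℝ) * Q := by rw [Finset.sum_const, hS, nsmul_eq_mul]
    have hlb : (m:ℝ) * (Q - m) ≤ ∑ v ∈ S, ((m:ℝ) * ⟪x v, c⟫_ℝ) := by
      calc (m:ℝ) * (Q - m) = ∑ _v ∈ S, (Q - m) := by
            rw [Finset.sum_const, hS, nsmul_eq_mul]
        _ ≤ ∑ v ∈ S, ((m:ℝ) * ⟪x v, c⟫_ℝ) :=
            Finset.sum_le_sum (fun v hv => (hxc v hv).1)
    constructor
    · exact (mul_le_mul_iff_right₀ hm0).mp (by rw [hrw]; exact hlb)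
    · exact (mul_le_mul_iff_right₀ hm0).mp (by rw [hrw]; exact hub)
  -- inner products of the centered vectors
  have hzin : ∀ u v : V, ⟪z u, z v⟫_ℝ
      = ⟪x u, x v⟫_ℝ - ⟪x u, c⟫_ℝ - ⟪x v, c⟫_ℝ + ⟪c, c⟫_ℝ := by
    intro u v
    rw [hz, hz, inner_sub_left, inner_sub_right, inner_sub_right,
      real_inner_comm c (x v)]
    ring
  have hzdiag : ∀ v ∈ S, Q * ((m:ℝ) - 1) - m ≤ (m:ℝ) * ‖z v‖^2 := by
    intro v hv
    obtain ⟨h1a, h1b⟩ := hxc v hv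
    obtain ⟨h2a, h2b⟩ := hcc
    have h3 : ‖z v‖^2 = Q - 2 * ⟪x v, c⟫_ℝ + ⟪c, c⟫_ℝ := by
      rw [← real_inner_self_eq_norm_sq, hzin v v, hxx v]
      ring
    rw [h3]
    generalize hgp : ⟪x v, c⟫_ℝ = p at h1a h1b ⊢
    generalize hgq : ⟪c, c⟫_ℝ = q at h2a h2b ⊢
    nlinarith
  have hzoff : ∀ u ∈ S, ∀ v ∈ S, u ≠ v →
      |(m:ℝ) * ⟪z u, z v⟫_ℝ| ≤ Q + 2 * m := by
    intro u hu v hv huv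
    obtain ⟨h1a, h1b⟩ := hxc u hu
    obtain ⟨h2a, h2b⟩ := hxc v hv
    obtain ⟨h3a, h3b⟩ := hcc
    obtain ⟨h4a, h4b⟩ := hxy u v huv
    rw [abs_le, hzin u v]
    generalize hgp : ⟪x u, c⟫_ℝ = p at h1a h1b ⊢
    generalize hgq : ⟪x v, c⟫_ℝ = q at h2a h2b ⊢
    generalize hgr : ⟪c, c⟫_ℝ = r at h3a h3b ⊢
    generalize hgs : ⟪x u, x v⟫_ℝ = s' at h4a h4b ⊢
    have e1 := mul_le_mul_of_nonneg_left h4a hm0.le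
    have e2 := mul_le_mul_of_nonneg_left h4b hm0.le
    constructor <;> nlinarith
  -- the max of the squared norms
  set K : ℝ := S.sup' hSne (fun v => ‖z v‖ ^ 2) with hK
  obtain ⟨v₀, hv₀⟩ := hSne
  have hKub : ∀ v ∈ S, ‖z v‖^2 ≤ K := fun v hv => by
    rw [hK]; exact Finset.le_sup' (fun v => ‖z v‖^2) hv
  have hK0 : 0 ≤ K := le_trans (sq_nonneg _) (hKub v₀ hv₀)
  have hKlb : Q * ((m:ℝ) - 1) - m ≤ (m:ℝ) * K := by
    calc Q * ((m:ℝ) - 1) - m ≤ (m:ℝ) * ‖z v₀‖^2 := hzdiag v₀ hv₀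
      _ ≤ (m:ℝ) * K := mul_le_mul_of_nonneg_left (hKub v₀ hv₀) hm0.le
  -- abbreviation for the off-diagonal bound
  set β : ℝ := (Q + 2 * m) / m with hβdef
  have hmβ : (m:ℝ) * β = Q + 2 * m := by
    rw [hβdef]; field_simp
  have hβ0 : 0 ≤ β := by
    rw [hβdef]; positivity
  have hβbound : ∀ u ∈ S, ∀ v ∈ S, u ≠ v → |⟪z u, z v⟫_ℝ| ≤ β := by
    intro u hu v hv huv
    have h := hzoff u hu v hv huv
    rw [abs_mul, abs_of_pos hm0] at h
    rw [hβdef, le_div_iff₀ hm0]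
    linarith [h]
  -- the key numeric inequality
  have hnum : K + ((m:ℝ) - 1) * β ≤ (((m:ℝ) + 1.515) / 2) * K := by
    have hM2 : 90000 * (n:ℝ)^2 ≤ M^2 := by nlinarith
    have hQm : 90000 * (m:ℝ)^2 ≤ Q := by nlinarith
    rw [div_mul_eq_mul_div, le_div_iff₀ (by norm_num : (0:ℝ) < 2)]
    have hfac : (1.03:ℝ) ≤ ((m:ℝ)-1) * ((m:ℝ)-2.485) := by
      nlinarith [sq_nonneg ((m:ℝ)-3)]
    have key : (m:ℝ) * (5 * m - 4.485) ≤ Q * ((m:ℝ)-1) * ((m:ℝ)-2.485) := by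
      nlinarith [mul_le_mul_of_nonneg_left hfac (le_of_lt hQpos),
        mul_le_mul_of_nonneg_right hQm (by linarith : (0:ℝ) ≤ ((m:ℝ)-1)*((m:ℝ)-2.485)),
        sq_nonneg (m:ℝ), mul_pos hm0 hm0]
    nlinarith [mul_le_mul_of_nonneg_left hKlb (by linarith : (0:ℝ) ≤ (m:ℝ) - 0.485),
      mul_le_mul_of_nonneg_left hmβ.le (by linarith : (0:ℝ) ≤ (m:ℝ) - 1)]
  -- the main argument
  set t : V → ℝ := fun v => ⟪y, z v⟫_ℝ with ht
  set T : ℝ := ∑ v ∈ S, t v ^ 2 with hT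
  have hT0 : 0 ≤ T := Finset.sum_nonneg (fun v _ => sq_nonneg _)
  set w : EuclideanSpace ℝ (E ⊕ V) := ∑ v ∈ S, t v • z v with hw
  have hyw : ⟪y, w⟫_ℝ = T := by
    rw [hw, inner_sum]
    apply Finset.sum_congr rfl
    intro v _
    rw [real_inner_smul_right, ht]
    ring
  have hww : ⟪w, w⟫_ℝ ≤ T * (K + ((m:ℝ) - 1) * β) := by
    have hexp : ⟪w, w⟫_ℝ = ∑ u ∈ S, ∑ v ∈ S, t u * t v * ⟪z u, z v⟫_ℝ := by
      rw [hw, sum_inner]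
      apply Finset.sum_congr rfl
      intro u _
      rw [real_inner_smul_left, inner_sum, Finset.mul_sum]
      apply Finset.sum_congr rfl
      intro v _
      rw [real_inner_smul_right]
      ring
    rw [hexp]
    have hrow : ∀ u ∈ S, ∑ v ∈ S, t u * t v * ⟪z u, z v⟫_ℝ
        ≤ t u ^ 2 * K + ∑ v ∈ S.erase u, |t u| * |t v| * β := by
      intro u hu
      rw [← Finset.add_sum_erase _ _ hu]
      apply add_le_add
      · have : t u * t u * ⟪z u, z u⟫_ℝ = t u ^ 2 * ‖z u‖^2 := by
          rw [real_inner_self_eq_norm_sq]; ring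
        rw [this]
        exact mul_le_mul_of_nonneg_left (hKub u hu) (sq_nonneg _)
      · apply Finset.sum_le_sum
        intro v hv
        have hne : u ≠ v := (Finset.ne_of_mem_erase hv).symm
        have hb := hβbound u hu v (Finset.mem_of_mem_erase hv) hne
        calc t u * t v * ⟪z u, z v⟫_ℝ ≤ |t u * t v * ⟪z u, z v⟫_ℝ| := le_abs_self _
          _ = |t u| * |t v| * |⟪z u, z v⟫_ℝ| := by rw [abs_mul, abs_mul]
          _ ≤ |t u| * |t v| * β := by
              apply mul_le_mul_of_nonneg_left hb
              positivity
    have hD : ∑ u ∈ S, ∑ v ∈ S.erase u, |t u| * |t v| * β ≤ ((m:ℝ) - 1) * β * T := by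
      have hinnerD : ∀ u ∈ S, ∑ v ∈ S.erase u, |t u| * |t v| * β
          = (|t u| * (∑ v ∈ S, |t v|) - t u ^ 2) * β := by
        intro u hu
        rw [← Finset.sum_mul]
        congr 1
        rw [← Finset.mul_sum, Finset.sum_erase_eq_sub hu]
        rw [mul_sub, ← abs_mul, ← sq_abs (t u), sq, abs_mul]
      rw [Finset.sum_congr rfl hinnerD, ← Finset.sum_mul]
      have hsub : ∑ u ∈ S, (|t u| * (∑ v ∈ S, |t v|) - t u ^ 2)
          = (∑ v ∈ S, |t v|) ^ 2 - T := by
        rw [Finset.sum_sub_distrib, ← Finset.sum_mul, sq, hT]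
      rw [hsub]
      have hCS : (∑ v ∈ S, |t v|) ^ 2 ≤ (m:ℝ) * T := by
        have := sq_sum_le_card_mul_sum_sq (s := S) (f := fun v => |t v|)
        simp only [sq_abs] at this
        rw [hS] at this
        exact_mod_cast this
      have hh := mul_le_mul_of_nonneg_right hCS hβ0
      nlinarith [hh]
    calc ∑ u ∈ S, ∑ v ∈ S, t u * t v * ⟪z u, z v⟫_ℝ
        ≤ ∑ u ∈ S, (t u ^ 2 * K + ∑ v ∈ S.erase u, |t u| * |t v| * β) :=
          Finset.sum_le_sum hrow
      _ = T * K + ∑ u ∈ S, ∑ v ∈ S.erase u, |t u| * |t v| * β := by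
          rw [Finset.sum_add_distrib, ← Finset.sum_mul]
      _ ≤ T * K + ((m:ℝ) - 1) * β * T := by linarith [hD]
      _ = T * (K + ((m:ℝ) - 1) * β) := by ring
  -- Cauchy–Schwarz step
  have hCS2 : T ^ 2 ≤ ‖y‖^2 * ⟪w, w⟫_ℝ := by
    have h1 : |⟪y, w⟫_ℝ| ≤ ‖y‖ * ‖w‖ := abs_real_inner_le_norm y w
    have h2 : T ^ 2 ≤ (‖y‖ * ‖w‖)^2 := by
      rw [← hyw, ← sq_abs]
      exact pow_le_pow_left₀ (abs_nonneg _) h1 2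
    calc T ^ 2 ≤ (‖y‖ * ‖w‖)^2 := h2
      _ = ‖y‖^2 * ‖w‖^2 := by ring
      _ = ‖y‖^2 * ⟪w, w⟫_ℝ := by rw [real_inner_self_eq_norm_sq]
  have hgoal : T ≤ (((m:ℝ) + 1.515) / 2) * ‖y‖^2 * K := by
    rcases eq_or_lt_of_le hT0 with hT0' | hTpos
    · rw [← hT0']
      have h1 : (0:ℝ) ≤ ((m:ℝ) + 1.515) / 2 := by linarith
      positivity
    · have hy2 : (0:ℝ) ≤ ‖y‖^2 := sq_nonneg _
      have step1 : T ^ 2 ≤ ‖y‖^2 * (T * (K + ((m:ℝ) - 1) * β)) := by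
        calc T ^ 2 ≤ ‖y‖^2 * ⟪w, w⟫_ℝ := hCS2
          _ ≤ ‖y‖^2 * (T * (K + ((m:ℝ) - 1) * β)) :=
              mul_le_mul_of_nonneg_left hww hy2
      have step2 : T ≤ ‖y‖^2 * (K + ((m:ℝ) - 1) * β) := by
        have h' : T * T ≤ (‖y‖^2 * (K + ((m:ℝ) - 1) * β)) * T := by
          calc T * T = T^2 := (sq T).symm
            _ ≤ ‖y‖^2 * (T * (K + ((m:ℝ) - 1) * β)) := step1
            _ = (‖y‖^2 * (K + ((m:ℝ) - 1) * β)) * T := by ring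
        exact le_of_mul_le_mul_right h' hTpos
      calc T ≤ ‖y‖^2 * (K + ((m:ℝ) - 1) * β) := step2
        _ ≤ ‖y‖^2 * ((((m:ℝ) + 1.515) / 2) * K) :=
            mul_le_mul_of_nonneg_left hnum hy2
        _ = (((m:ℝ) + 1.515) / 2) * ‖y‖^2 * K := by ring
  calc ∑ v ∈ S, ⟪y, z v⟫_ℝ ^ 2 = T := rfl
    _ ≤ (((m:ℝ) + 1.515) / 2) * ‖y‖^2 * K := hgoal
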